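/- Every countable group admits a coarse embedding into c₀: if G is a countable group with a proper length function l and associated left-invariant metric d_l, then there exists a coarse embedding of (G, d_l) into the Banach space c₀ of real sequences converging to 0, equipped with the supremum norm. -/

import Mathlib

open Filter

/-- Every countable group with a proper length metric coarsely embeds into the
Banach space `c₀` of real sequences converging to `0`, with the sup norm
(formalized as the zero-at-infinity continuous maps `C₀(ℕ, ℝ)`). -/
theorem coarse_embedding_into_c0
    (G : Type*) [Group G] [Countable G] (l : G → ℝ)
    (hl0 : ∀ g : G, 0 ≤ l g) (hlinv : ∀ g : G, l g⁻¹ = l g)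
    (hlsub : ∀ g h : G, l (g * h) ≤ l g + l h)
    (hlzero : ∀ g : G, l g = 0 ↔ g = 1)
    (hlproper : ∀ R : ℝ, 0 < R → {g : G | l g ≤ R}.Finite) :
    ∃ f : G → ZeroAtInftyContinuousMap ℕ ℝ, ∃ ρ₁ ρ₂ : ℝ → ℝ,
      Monotone ρ₁ ∧ Monotone ρ₂ ∧ Tendsto ρ₁ atTop atTop ∧
      ∀ g h : G, ρ₁ (l (g⁻¹ * h)) ≤ dist (f g) (f h) ∧
        dist (f g) (f h) ≤ ρ₂ (l (g⁻¹ * h)) := by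
  obtain ⟨ι, hι⟩ := exists_injective_nat G
  have hl1 : l 1 = 0 := (hlzero 1).mpr rfl
  -- the coordinate functions
  set F : G → ℕ → ℝ :=
    fun g => Function.extend ι (fun x => max 0 (l x / 2 - l (x⁻¹ * g))) 0 with hF
  have hFap : ∀ g x : G, F g (ι x) = max 0 (l x / 2 - l (x⁻¹ * g)) := by
    intro g x
    simp [hF, hι.extend_apply]
  -- triangle-type estimate: |l(x⁻¹ g) - l(x⁻¹ h)| ≤ l(g⁻¹ h)
  have key : ∀ x g h : G, l (x⁻¹ * g) - l (x⁻¹ * h) ≤ l (g⁻¹ * h) := by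
    intro x g h
    have := hlsub (x⁻¹ * h) (h⁻¹ * g)
    have h2 : l (h⁻¹ * g) = l (g⁻¹ * h) := by
      rw [← hlinv (h⁻¹ * g)]; simp
    simp only [mul_assoc, mul_inv_cancel_left] at this
    linarith
  -- coordinatewise Lipschitz bound
  have hlip : ∀ g h : G, ∀ n : ℕ, |F g n - F h n| ≤ l (g⁻¹ * h) := by
    intro g h n
    rcases em (∃ x, ι x = n) with ⟨x, rfl⟩ | hn
    · rw [hFap, hFap]
      have h1 := key x g h
      have h2 := key x h g
      have h3 : l (h⁻¹ * g) = l (g⁻¹ * h) := by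
        rw [← hlinv (h⁻¹ * g)]; simp
      rw [h3] at h2
      rcases le_total (l x / 2 - l (x⁻¹ * g)) 0 with hg | hg <;>
        rcases le_total (l x / 2 - l (x⁻¹ * h)) 0 with hh | hh <;>
        rw [abs_le] <;> constructor <;>
        simp [max_eq_left, max_eq_right, hg, hh] <;> nlinarith [hl0 (g⁻¹ * h)]
    · have e1 : F g n = 0 := by
        simp [hF, Function.extend_apply' _ _ _ hn]
      have e2 : F h n = 0 := by
        simp [hF, Function.extend_apply' _ _ _ hn]
      rw [e1, e2]
      simpa using hl0 (g⁻¹ * h)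
  -- each F g has finite support, hence is zero at infinity
  have hfin : ∀ g : G, {n : ℕ | F g n ≠ 0}.Finite := by
    intro g
    have : {n : ℕ | F g n ≠ 0} ⊆ ι '' {x : G | l x ≤ 2 * l g + 1} := by
      intro n hn
      rcases em (∃ x, ι x = n) with ⟨x, rfl⟩ | hmem
      · refine ⟨x, ?_, rfl⟩
        simp only [Set.mem_setOf_eq, hFap] at hn
        have hpos : 0 < l x / 2 - l (x⁻¹ * g) := by
          by_contra hc
          push_neg at hc
          exact hn (max_eq_left hc)
        have htr : l x ≤ l g + l (x⁻¹ * g) := by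
          have := hlsub g (g⁻¹ * x)
          simp only [mul_inv_cancel_left] at this
          have h3 : l (g⁻¹ * x) = l (x⁻¹ * g) := by
            rw [← hlinv (g⁻¹ * x)]; simp
          linarith
        have := hl0 g
        simp only [Set.mem_setOf_eq]
        linarith
      · exact absurd (by simp [hF, Function.extend_apply' _ _ _ hmem]) hn
    exact ((hlproper (2 * l g + 1) (by nlinarith [hl0 g])).image ι).subset this
  -- build the maps into C₀(ℕ, ℝ)
  set f : G → ZeroAtInftyContinuousMap ℕ ℝ := fun g =>
    { toFun := F g
      continuous_toFun := continuous_of_discreteTopology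
      zero_at_infty' := by
        rw [cocompact_eq_cofinite]
        refine tendsto_const_nhds.congr' ?_
        filter_upwards [(hfin g).compl_mem_cofinite] with n hn
        simpa using (not_not.mp hn).symm } with hfdef
  have hfF : ∀ g : G, ∀ n : ℕ, f g n = F g n := fun _ _ => rfl
  have hdist_coord : ∀ g h : G, ∀ n : ℕ, |F g n - F h n| ≤ dist (f g) (f h) := by
    intro g h n
    rw [← ZeroAtInftyContinuousMap.dist_toBCF_eq_dist]
    simpa [Real.dist_eq, hfF] using
      BoundedContinuousFunction.dist_coe_le_dist (f := (f g).toBCF) (g := (f h).toBCF) n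
  refine ⟨f, fun r => r / 4, id, fun a b hab => by linarith, monotone_id,
    (tendsto_id.atTop_div_const (by norm_num)), fun g h => ⟨?_, ?_⟩⟩
  · -- lower bound
    set D := l (g⁻¹ * h) with hD
    have hD0 : 0 ≤ D := hl0 _
    have hDle : D ≤ l g + l h := by
      have := hlsub g⁻¹ h
      rw [hlinv] at this
      linarith
    have hsym : l (h⁻¹ * g) = D := by rw [← hlinv (h⁻¹ * g)]; simp [hD]
    rcases le_total (l g) (l h) with hcase | hcase
    · -- use coordinate ι h
      have h1 : F h (ι h) = l h / 2 := by
        rw [hFap]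
        simp only [inv_mul_cancel, hl1, sub_zero]
        exact max_eq_right (div_nonneg (hl0 h) (by norm_num))
      have h2 : F g (ι h) = max 0 (l h / 2 - D) := by
        rw [hFap, hsym]
      have := hdist_coord g h (ι h)
      rw [h1, h2] at this
      rcases le_total (l h / 2 - D) 0 with hc | hc
      · rw [max_eq_left hc] at this
        rw [abs_of_nonpos (by nlinarith [hl0 h])] at this
        nlinarith [hl0 h]
      · rw [max_eq_right hc] at this
        rw [abs_of_nonpos (by linarith)] at this
        linarith
    · -- use coordinate ι g
      have h1 : F g (ι g) = l g / 2 := by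
        rw [hFap]
        simp only [inv_mul_cancel, hl1, sub_zero]
        exact max_eq_right (div_nonneg (hl0 g) (by norm_num))
      have h2 : F h (ι g) = max 0 (l g / 2 - D) := by
        rw [hFap, hD]
      have := hdist_coord g h (ι g)
      rw [h1, h2] at this
      rcases le_total (l g / 2 - D) 0 with hc | hc
      · rw [max_eq_left hc] at this
        rw [abs_of_nonneg (by nlinarith [hl0 g])] at this
        nlinarith [hl0 g]
      · rw [max_eq_right hc] at this
        rw [abs_of_nonneg (by linarith)] at this
        linarith
  · -- upper bound
    rw [← ZeroAtInftyContinuousMap.dist_toBCF_eq_dist]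
    refine BoundedContinuousFunction.dist_le (hl0 _) |>.mpr fun n => ?_
    simpa [Real.dist_eq, hfF] using hlip g h n
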